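/- Every countable ring R admits a proper norm: there is a function |·| : R → [0,∞) such that (a,b) ↦ |a-b| is a metric on R whose closed balls are finite (hence compact in the discrete topology), and |rs| ≤ |r||s| for all r,s ∈ R. -/

import Mathlib

namespace Stmt11Aux

variable {R : Type*} [Ring R]

/-- weight of a generator -/
def w (g : R → ℕ) (x : R) : ℕ := 2 ^ (g x + 1)

/-- value of one signed monomial -/
def term (p : Bool × List R) : R := (if p.1 then (1 : R) else -1) * p.2.prod

def leval (L : List (Bool × List R)) : R := (L.map term).sum

def mval (g : R → ℕ) (m : List R) : ℕ := (m.map (w g)).prod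

def lval (g : R → ℕ) (L : List (Bool × List R)) : ℕ := (L.map fun p => mval g p.2).sum

def IsRep (a : R) (L : List (Bool × List R)) : Prop :=
  leval L = a ∧ L ≠ [] ∧ ∀ p ∈ L, p.2 ≠ []

open scoped Classical in
noncomputable def nuN (g : R → ℕ) (a : R) : ℕ :=
  if a = 0 then 0 else sInf {n | ∃ L, IsRep a L ∧ lval g L = n}

lemma isRep_single (a : R) : IsRep a [(true, [a])] := by
  refine ⟨by simp [leval, term], by simp, by simp⟩

lemma two_le_w (g : R → ℕ) (x : R) : 2 ≤ w g x := by
  have : 2 ^ 1 ≤ 2 ^ (g x + 1) := Nat.pow_le_pow_right (by norm_num) (by omega)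
  simpa [w] using this

lemma two_le_mval (g : R → ℕ) {m : List R} (hm : m ≠ []) : 2 ≤ mval g m := by
  obtain ⟨x, t, rfl⟩ := List.exists_cons_of_ne_nil hm
  have h1 : 1 ≤ (t.map (w g)).prod := by
    apply List.one_le_prod_of_one_le
    intro y hy
    obtain ⟨z, hz, rfl⟩ := List.mem_map.1 hy
    exact le_trans (by norm_num) (two_le_w g z)
  calc 2 = 2 * 1 := by ring
    _ ≤ w g x * (t.map (w g)).prod := Nat.mul_le_mul (two_le_w g x) h1
    _ = mval g (x :: t) := by simp [mval]

lemma nuN_le {g : R → ℕ} {a : R} {L : List (Bool × List R)} (h : IsRep a L) (ha : a ≠ 0) :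
    nuN g a ≤ lval g L := by
  rw [nuN, if_neg ha]
  exact Nat.sInf_le ⟨L, h, rfl⟩

lemma nuN_spec {g : R → ℕ} {a : R} (ha : a ≠ 0) :
    ∃ L, IsRep a L ∧ lval g L = nuN g a := by
  have hne : {n | ∃ L, IsRep a L ∧ lval g L = n}.Nonempty :=
    ⟨_, [(true, [a])], isRep_single a, rfl⟩
  have := Nat.sInf_mem hne
  rw [nuN, if_neg ha]
  exact this

lemma two_le_nuN {g : R → ℕ} {a : R} (ha : a ≠ 0) : 2 ≤ nuN g a := by
  obtain ⟨L, ⟨_, hL, hmon⟩, hval⟩ := nuN_spec (g := g) ha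
  obtain ⟨p, t, rfl⟩ := List.exists_cons_of_ne_nil hL
  have : 2 ≤ lval g (p :: t) := by
    have := two_le_mval g (hmon p (by simp))
    simp only [lval, List.map_cons, List.sum_cons]
    omega
  omega

lemma leval_append (L1 L2 : List (Bool × List R)) :
    leval (L1 ++ L2) = leval L1 + leval L2 := by
  simp [leval]

lemma lval_append (g : R → ℕ) (L1 L2 : List (Bool × List R)) :
    lval g (L1 ++ L2) = lval g L1 + lval g L2 := by
  simp [lval]

/-- negation of a representation -/
def negL (L : List (Bool × List R)) : List (Bool × List R) := L.map fun p => (!p.1, p.2)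

lemma leval_negL (L : List (Bool × List R)) : leval (negL L) = -leval L := by
  induction L with
  | nil => simp [leval, negL]
  | cons p t ih =>
    obtain ⟨s, m⟩ := p
    have hterm : term (!s, m) = -term (s, m) := by
      cases s <;> simp [term]
    simp only [negL, List.map_cons, leval, List.sum_cons] at ih ⊢
    rw [hterm, show ((t.map fun p => (!p.1, p.2)).map term).sum = -(t.map term).sum from ih,
      neg_add]

lemma lval_negL (g : R → ℕ) (L : List (Bool × List R)) : lval g (negL L) = lval g L := by
  simp only [lval, negL, List.map_map]
  rfl

lemma nuN_neg (g : R → ℕ) (a : R) : nuN g (-a) = nuN g a := by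
  have key : ∀ b : R, nuN g (-b) ≤ nuN g b := by
    intro b
    by_cases hb : b = 0
    · simp [hb]
    obtain ⟨L, ⟨he, hL, hmon⟩, hval⟩ := nuN_spec (g := g) hb
    have hrep : IsRep (-b) (negL L) := by
      refine ⟨by rw [leval_negL, he], by simp [negL, hL], ?_⟩
      intro p hp
      obtain ⟨q, hq, rfl⟩ := List.mem_map.1 hp
      exact hmon q hq
    have := nuN_le (g := g) hrep (by simpa using hb)
    rw [lval_negL, hval] at this
    exact this
  have h1 := key a
  have h2 := key (-a)
  rw [neg_neg] at h2
  omega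

lemma nuN_add (g : R → ℕ) (a b : R) : nuN g (a + b) ≤ nuN g a + nuN g b := by
  by_cases ha : a = 0
  · subst ha; rw [zero_add]; simp [nuN]
  by_cases hb : b = 0
  · subst hb; rw [add_zero]; simp [nuN]
  by_cases hab : a + b = 0
  · simp [hab, nuN]
  obtain ⟨L1, h1, hv1⟩ := nuN_spec (g := g) ha
  obtain ⟨L2, h2, hv2⟩ := nuN_spec (g := g) hb
  have hrep : IsRep (a + b) (L1 ++ L2) := by
    refine ⟨by rw [leval_append, h1.1, h2.1], by simp [h1.2.1], ?_⟩
    intro p hp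
    rcases List.mem_append.1 hp with h | h
    · exact h1.2.2 p h
    · exact h2.2.2 p h
  have := nuN_le (g := g) hrep hab
  rw [lval_append, hv1, hv2] at this
  exact this

lemma term_mul (p q : Bool × List R) :
    term (p.1 == q.1, p.2 ++ q.2) = term p * term q := by
  obtain ⟨s, m⟩ := p
  obtain ⟨u, m'⟩ := q
  cases s <;> cases u <;>
    simp [term, List.prod_append, neg_mul, mul_neg, neg_neg, mul_assoc]

/-- product of representations -/
def mulL (L1 L2 : List (Bool × List R)) : List (Bool × List R) :=
  L1.flatMap fun p => L2.map fun q => (p.1 == q.1, p.2 ++ q.2)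

lemma leval_map_mul (p : Bool × List R) (L2 : List (Bool × List R)) :
    leval (L2.map fun q => (p.1 == q.1, p.2 ++ q.2)) = term p * leval L2 := by
  induction L2 with
  | nil => simp [leval]
  | cons q t ih =>
    simp only [List.map_cons, leval, List.sum_cons] at ih ⊢
    rw [show term (p.1 == q.1, p.2 ++ q.2) = term p * term q from term_mul p q, ih, mul_add]

lemma leval_mulL (L1 L2 : List (Bool × List R)) :
    leval (mulL L1 L2) = leval L1 * leval L2 := by
  induction L1 with
  | nil => simp [leval, mulL]
  | cons p t ih =>
    rw [mulL, List.flatMap_cons, leval_append, leval_map_mul, ← mulL, ih]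
    simp only [leval, List.map_cons, List.sum_cons]
    rw [add_mul]

lemma mval_append (g : R → ℕ) (m1 m2 : List R) :
    mval g (m1 ++ m2) = mval g m1 * mval g m2 := by
  simp [mval]

lemma lval_map_mul (g : R → ℕ) (p : Bool × List R) (L2 : List (Bool × List R)) :
    lval g (L2.map fun q => (p.1 == q.1, p.2 ++ q.2)) = mval g p.2 * lval g L2 := by
  induction L2 with
  | nil => simp [lval]
  | cons q t ih =>
    simp only [List.map_cons, lval, List.sum_cons] at ih ⊢
    rw [mval_append, ih, mul_add]

lemma lval_mulL (g : R → ℕ) (L1 L2 : List (Bool × List R)) :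
    lval g (mulL L1 L2) = lval g L1 * lval g L2 := by
  induction L1 with
  | nil => simp [lval, mulL]
  | cons p t ih =>
    rw [mulL, List.flatMap_cons, lval_append, lval_map_mul, ← mulL, ih]
    simp only [lval, List.map_cons, List.sum_cons]
    ring

lemma nuN_mul (g : R → ℕ) (a b : R) : nuN g (a * b) ≤ nuN g a * nuN g b := by
  by_cases ha : a = 0
  · simp [ha, nuN]
  by_cases hb : b = 0
  · simp [hb, nuN]
  by_cases hab : a * b = 0
  · simp [hab, nuN]
  obtain ⟨L1, h1, hv1⟩ := nuN_spec (g := g) ha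
  obtain ⟨L2, h2, hv2⟩ := nuN_spec (g := g) hb
  have hrep : IsRep (a * b) (mulL L1 L2) := by
    refine ⟨by rw [leval_mulL, h1.1, h2.1], ?_, ?_⟩
    · obtain ⟨p, t, rfl⟩ := List.exists_cons_of_ne_nil h1.2.1
      obtain ⟨q, s, rfl⟩ := List.exists_cons_of_ne_nil h2.2.1
      simp [mulL]
    · intro p hp
      simp only [mulL, List.mem_flatMap, List.mem_map] at hp
      obtain ⟨x, hx, y, hy, rfl⟩ := hp
      simp only [ne_eq, List.append_eq_nil_iff]
      exact fun h => h1.2.2 x hx h.1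
  have := nuN_le (g := g) hrep hab
  rw [lval_mulL, hv1, hv2] at this
  exact this

lemma length_le_sum (l : List ℕ) (h : ∀ x ∈ l, 1 ≤ x) : l.length ≤ l.sum := by
  induction l with
  | nil => simp
  | cons x t ih =>
    have := h x (by simp)
    have := ih fun y hy => h y (by simp [hy])
    simp only [List.length_cons, List.sum_cons]
    omega

lemma mem_le_sum {l : List ℕ} {x : ℕ} (h : x ∈ l) : x ≤ l.sum := by
  induction l with
  | nil => simp at h
  | cons y t ih =>
    rcases List.mem_cons.1 h with rfl | h
    · simp
    · have := ih h; simp only [List.sum_cons]; omega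

/-- lists of bounded length with entries in a finite set form a finite set -/
lemma finite_lists {α : Type*} {s : Set α} (hs : s.Finite) (N : ℕ) :
    {l : List α | l.length ≤ N ∧ ∀ x ∈ l, x ∈ s}.Finite := by
  haveI := hs.to_subtype
  have hT : {l : List ↥s | l.length ≤ N}.Finite := List.finite_length_le ↥s N
  have himg : {l : List α | l.length ≤ N ∧ ∀ x ∈ l, x ∈ s} ⊆
      (fun l : List ↥s => l.map Subtype.val) '' {l : List ↥s | l.length ≤ N} := by
    rintro l ⟨hlen, hmem⟩
    refine ⟨l.attach.map fun x => (⟨x.1, hmem x.1 x.2⟩ : ↥s), ?_, ?_⟩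
    · simpa using hlen
    · simp [List.map_map, Function.comp]
  exact (hT.image _).subset himg

lemma finite_ball (g : R → ℕ) (hg : Function.Injective g) (N : ℕ) :
    {c : R | nuN g c ≤ N}.Finite := by
  classical
  set F : Set R := g ⁻¹' (Set.Iic N) with hF
  have hFfin : F.Finite := (Set.finite_Iic N).preimage hg.injOn
  set A : Set (Bool × List R) :=
    {p | p.2.length ≤ N ∧ ∀ x ∈ p.2, x ∈ F} with hA
  have hAfin : A.Finite := by
    have hM : {m : List R | m.length ≤ N ∧ ∀ x ∈ m, x ∈ F}.Finite := finite_lists hFfin N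
    have : A ⊆ (Set.univ : Set Bool) ×ˢ {m : List R | m.length ≤ N ∧ ∀ x ∈ m, x ∈ F} := by
      rintro ⟨b, m⟩ hm
      exact ⟨trivial, hm⟩
    exact (Set.Finite.prod (Set.finite_univ) hM).subset this
  have hSfin : {L : List (Bool × List R) | L.length ≤ N ∧ ∀ p ∈ L, p ∈ A}.Finite :=
    finite_lists hAfin N
  have hsub : {c : R | nuN g c ≤ N} ⊆
      insert 0 (leval '' {L : List (Bool × List R) | L.length ≤ N ∧ ∀ p ∈ L, p ∈ A}) := by
    intro c hc
    by_cases hc0 : c = 0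
    · exact Set.mem_insert_iff.2 (Or.inl hc0)
    right
    obtain ⟨L, ⟨he, hL, hmon⟩, hval⟩ := nuN_spec (g := g) hc0
    have hvle : lval g L ≤ N := by rw [hval]; exact hc
    refine ⟨L, ⟨?_, ?_⟩, he⟩
    · -- L.length ≤ N
      have h1 : L.length ≤ lval g L := by
        have := length_le_sum (L.map fun p => mval g p.2) ?_
        · simpa [lval] using this
        · intro x hx
          obtain ⟨p, hp, rfl⟩ := List.mem_map.1 hx
          exact le_trans (by norm_num) (two_le_mval g (hmon p hp))
      omega
    · intro p hp
      have hmle : mval g p.2 ≤ lval g L :=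
        mem_le_sum (List.mem_map_of_mem (f := fun q => mval g q.2) hp)
      have hmN : mval g p.2 ≤ N := le_trans hmle hvle
      constructor
      · -- p.2.length ≤ N
        have h2 : 2 ^ p.2.length ≤ mval g p.2 := by
          have := List.pow_card_le_prod (p.2.map (w g)) 2 ?_
          · simpa [mval] using this
          · intro x hx
            obtain ⟨z, hz, rfl⟩ := List.mem_map.1 hx
            exact two_le_w g z
        have := Nat.lt_two_pow_self (n := p.2.length)
        omega
      · intro x hx
        have hdvd : w g x ∣ mval g p.2 :=
          List.dvd_prod (List.mem_map_of_mem (f := w g) hx)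
        have hpos : 0 < mval g p.2 := lt_of_lt_of_le (by norm_num) (two_le_mval g (hmon p hp))
        have hwle : w g x ≤ mval g p.2 := Nat.le_of_dvd hpos hdvd
        have : g x < 2 ^ (g x + 1) := lt_of_lt_of_le ((Nat.lt_two_pow_self (n := g x)))
          (Nat.pow_le_pow_right (by norm_num) (by omega))
        have : g x ≤ N := by
          have := hwle.trans hmN
          simp only [w] at this
          omega
        exact this
  exact ((hSfin.image leval).insert 0).subset hsub

end Stmt11Aux

open Stmt11Aux in
theorem stmt_11 (R : Type*) [Ring R] [Countable R] :
    ∃ ν : R → ℝ,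
      (∀ a, 0 ≤ ν a) ∧
      (∀ a, ν a = 0 ↔ a = 0) ∧
      (∀ a, ν (-a) = ν a) ∧
      (∀ a b, ν (a + b) ≤ ν a + ν b) ∧
      (∀ a b, ν (a * b) ≤ ν a * ν b) ∧
      (∀ (a : R) (ε : ℝ), {b : R | ν (b - a) ≤ ε}.Finite) := by
  obtain ⟨g, hg⟩ := Countable.exists_injective_nat R
  refine ⟨fun a => (nuN g a : ℝ), fun a => by positivity, ?_, ?_, ?_, ?_, ?_⟩
  · intro a
    constructor
    · intro h
      by_contra ha
      have := two_le_nuN (g := g) ha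
      rw [Nat.cast_eq_zero] at h
      omega
    · intro h; simp [h, nuN]
  · intro a
    exact Nat.cast_inj.2 (nuN_neg g a)
  · intro a b
    simpa [Nat.cast_add] using (Nat.cast_le (α := ℝ)).2 (nuN_add g a b)
  · intro a b
    calc ((nuN g (a * b) : ℕ) : ℝ) ≤ ((nuN g a * nuN g b : ℕ) : ℝ) :=
          Nat.cast_le.2 (nuN_mul g a b)
      _ = (nuN g a : ℝ) * (nuN g b : ℝ) := by push_cast; ring
  · intro a ε
    have hfin := finite_ball g hg ⌊ε⌋₊
    have hsub : {b : R | ((nuN g (b - a) : ℕ) : ℝ) ≤ ε} ⊆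
        (fun c => c + a) '' {c : R | nuN g c ≤ ⌊ε⌋₊} := by
      intro b hb
      exact ⟨b - a, Nat.le_floor hb, sub_add_cancel b a⟩
    exact (hfin.image _).subset hsub
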